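/- Let $L$ be a linear subspace of $L_\infty(\Omega, \mathcal{A}, P_0)$. If there exists a finitely additive probability $P$ with $P \sim P_0$ and $E_P(X) = 0$ for all $X \in L$, then $\overline{L - L_\infty^+} \cap L_\infty^+ = \{0\}$, where the closure is taken in the norm topology of $L_\infty$. -/

import Mathlib

open MeasureTheory Set

namespace FAP

variable {Ω : Type*}

/-- A finitely additive probability on the power set of `Ω`. -/
def IsFAP (P : Set Ω → ℝ) : Prop :=
  P univ = 1 ∧ (∀ A : Set Ω, 0 ≤ P A) ∧
    ∀ A B : Set Ω, Disjoint A B → P (A ∪ B) = P A + P B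

/-- A finitely additive probability on the σ-field of a measurable space `Ω`. -/
def IsFAPm [MeasurableSpace Ω] (P : Set Ω → ℝ) : Prop :=
  P univ = 1 ∧ (∀ A : Set Ω, MeasurableSet A → 0 ≤ P A) ∧
    ∀ A B : Set Ω, MeasurableSet A → MeasurableSet B → Disjoint A B →
      P (A ∪ B) = P A + P B

/-- The finitely additive integral of a bounded function `X` with respect to a
finitely additive probability `P`, defined via the layer-cake formula
(which agrees with the uniform-limit-of-simple-functions definition). -/
noncomputable def faIntegral (P : Set Ω → ℝ) (X : Ω → ℝ) : ℝ :=
  (∫ t in Ioi (0 : ℝ), P {ω | t < X ω}) -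
    (∫ t in Iio (0 : ℝ), (1 - P {ω | t < X ω}))

/-- `P` is absolutely continuous with respect to the (countably additive) measure `P₀`. -/
def AC [MeasurableSpace Ω] (P : Set Ω → ℝ) (P₀ : Measure Ω) : Prop :=
  ∀ A : Set Ω, MeasurableSet A → P₀ A = 0 → P A = 0

/-- `P` and `P₀` have the same null sets. -/
def EquivP [MeasurableSpace Ω] (P : Set Ω → ℝ) (P₀ : Measure Ω) : Prop :=
  ∀ A : Set Ω, MeasurableSet A → (P A = 0 ↔ P₀ A = 0)

/-- `P` is pure: the only countably additive measure `Γ` with `0 ≤ Γ ≤ P` is `Γ = 0`. -/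
def IsPure [MeasurableSpace Ω] (P : Set Ω → ℝ) : Prop :=
  ∀ Γ : Measure Ω, (∀ A : Set Ω, MeasurableSet A → Γ A ≤ ENNReal.ofReal (P A)) → Γ = 0

/-- The essential supremum `inf {a : P₀(X > a) = 0}` of a random variable `X`. -/
noncomputable def essSupR [MeasurableSpace Ω] (P₀ : Measure Ω) (X : Ω → ℝ) : ℝ :=
  sInf {a : ℝ | P₀ {ω | a < X ω} = 0}

end FAP

open FAP

namespace FAPaux

variable {Ω : Type*} [MeasurableSpace Ω] {P : Set Ω → ℝ} {P₀ : Measure Ω}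

variable {Ω : Type*} [MeasurableSpace Ω] {P : Set Ω → ℝ} {P₀ : Measure Ω}

lemma P_mono (hP : FAP.IsFAPm P) {A B : Set Ω} (hA : MeasurableSet A) (hB : MeasurableSet B)
    (hAB : A ⊆ B) : P A ≤ P B := by
  have hd : Disjoint A (B \ A) := disjoint_sdiff_right
  have h := hP.2.2 A (B \ A) hA (hB.diff hA) hd
  rw [union_diff_cancel hAB] at h
  have h0 := hP.2.1 (B \ A) (hB.diff hA)
  linarith

lemma P_null (heq : FAP.EquivP P P₀) {A : Set Ω} (hA : MeasurableSet A) (h : P₀ A = 0) :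
    P A = 0 := (heq A hA).2 h

lemma P_ae_mono (hP : FAP.IsFAPm P) (heq : FAP.EquivP P P₀) {A B : Set Ω} (hA : MeasurableSet A)
    (hB : MeasurableSet B) (h : ∀ᵐ ω ∂P₀, ω ∈ A → ω ∈ B) : P A ≤ P B := by
  have hd : MeasurableSet (A \ B) := hA.diff hB
  have hnull : P₀ (A \ B) = 0 := by
    refine measure_mono_null (fun ω hω => ?_) (ae_iff.mp h)
    simp only [mem_setOf_eq, Classical.not_imp]
    exact ⟨hω.1, hω.2⟩
  have h0 : P (A \ B) = 0 := P_null heq hd hnull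
  have hdisj : Disjoint (A ∩ B) (A \ B) :=
    disjoint_left.mpr fun ω h1 h2 => h2.2 h1.2
  have hsplit := hP.2.2 (A ∩ B) (A \ B) (hA.inter hB) hd hdisj
  rw [inter_union_diff] at hsplit
  have hle := P_mono hP (hA.inter hB) hB inter_subset_right
  linarith

lemma P_le_one (hP : FAP.IsFAPm P) {A : Set Ω} (hA : MeasurableSet A) : P A ≤ 1 := by
  have := P_mono hP hA MeasurableSet.univ (subset_univ A)
  rwa [hP.1] at this

lemma P_eq_one (hP : FAP.IsFAPm P) (heq : FAP.EquivP P P₀) {A : Set Ω} (hA : MeasurableSet A)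
    (h : P₀ Aᶜ = 0) : P A = 1 := by
  have hd := hP.2.2 A Aᶜ hA hA.compl disjoint_compl_right
  rw [union_compl_self, hP.1] at hd
  have h0 : P Aᶜ = 0 := P_null heq hA.compl h
  linarith

-- layer function lemmas
lemma measSet {f : Ω → ℝ} (hf : Measurable f) (t : ℝ) : MeasurableSet {ω | t < f ω} :=
  measurableSet_lt measurable_const hf

lemma F_antitone (hP : FAP.IsFAPm P) {f : Ω → ℝ} (hf : Measurable f) :
    Antitone fun t => P {ω | t < f ω} := fun s t hst =>
  P_mono hP (measSet hf t) (measSet hf s) fun ω hω => lt_of_le_of_lt hst hω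

lemma F_nonneg (hP : FAP.IsFAPm P) {f : Ω → ℝ} (hf : Measurable f) (t : ℝ) :
    0 ≤ P {ω | t < f ω} := hP.2.1 _ (measSet hf t)

lemma F_le_one (hP : FAP.IsFAPm P) {f : Ω → ℝ} (hf : Measurable f) (t : ℝ) :
    P {ω | t < f ω} ≤ 1 := P_le_one hP (measSet hf t)

lemma F_zero (heq : FAP.EquivP P P₀) {f : Ω → ℝ} (hf : Measurable f) {C : ℝ}
    (hC : ∀ᵐ ω ∂P₀, f ω ≤ C) {t : ℝ} (ht : C ≤ t) : P {ω | t < f ω} = 0 := by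
  refine P_null heq (measSet hf t) (measure_mono_null (fun ω hω => ?_) (ae_iff.mp hC))
  simp only [mem_setOf_eq, not_le]
  exact lt_of_le_of_lt ht hω

lemma F_one (hP : FAP.IsFAPm P) (heq : FAP.EquivP P P₀) {f : Ω → ℝ} (hf : Measurable f) {c : ℝ}
    (hc : ∀ᵐ ω ∂P₀, c ≤ f ω) {t : ℝ} (ht : t < c) : P {ω | t < f ω} = 1 := by
  refine P_eq_one hP heq (measSet hf t) (measure_mono_null (fun ω hω => ?_) (ae_iff.mp hc))
  simp only [mem_compl_iff, mem_setOf_eq, not_lt] at hω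
  simp only [mem_setOf_eq, not_le]
  exact lt_of_le_of_lt hω ht


-- from aux2
lemma integrable_aux {h : ℝ → ℝ} (hm : Measurable h) (h0 : ∀ t, 0 ≤ h t) (h1 : ∀ t, h t ≤ 1)
    {lo hi : ℝ} (hlo : ∀ t, t ≤ lo → h t = 0) (hhi : ∀ t, hi ≤ t → h t = 0) :
    Integrable h := by
  have hb : Integrable ((Ioc lo hi).indicator fun _ => (1 : ℝ)) := by
    rw [integrable_indicator_iff measurableSet_Ioc]
    exact integrableOn_const measure_Ioc_lt_top.ne
  refine hb.mono' hm.aestronglyMeasurable (Filter.Eventually.of_forall fun t => ?_)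
  by_cases ht : t ∈ Ioc lo hi
  · rw [indicator_of_mem ht, Real.norm_eq_abs, abs_of_nonneg (h0 t)]
    exact h1 t
  · rw [indicator_of_notMem ht]
    have : h t = 0 := by
      rcases lt_or_ge lo t with h' | h'
      · refine hhi t ?_
        by_contra hc
        push_neg at hc
        exact ht ⟨h', hc.le⟩
      · exact hlo t h'
    simp [this]

lemma integrableOn_Ioi_aux {h : ℝ → ℝ} (hm : Measurable h) (h0 : ∀ t, 0 ≤ h t)
    (h1 : ∀ t, h t ≤ 1) {D : ℝ} (hhi : ∀ t, D ≤ t → h t = 0) (a : ℝ) :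
    IntegrableOn h (Ioi a) := by
  rw [← integrable_indicator_iff measurableSet_Ioi]
  refine integrable_aux (hm.indicator measurableSet_Ioi)
    (fun t => indicator_nonneg (fun s _ => h0 s) t)
    (fun t => ?_) (lo := a) (hi := D) (fun t ht => ?_) (fun t ht => ?_)
  · by_cases ht : t ∈ Ioi a
    · rw [indicator_of_mem ht]; exact h1 t
    · rw [indicator_of_notMem ht]; exact zero_le_one
  · have : t ∉ Ioi a := by simp [mem_Ioi]; linarith
    rw [indicator_of_notMem this]
  · by_cases ht' : t ∈ Ioi a
    · rw [indicator_of_mem ht']; exact hhi t ht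
    · rw [indicator_of_notMem ht']

lemma integrableOn_Iio_aux {h : ℝ → ℝ} (hm : Measurable h) (h0 : ∀ t, 0 ≤ h t)
    (h1 : ∀ t, h t ≤ 1) {D : ℝ} (hlo : ∀ t, t ≤ D → h t = 0) (a : ℝ) :
    IntegrableOn h (Iio a) := by
  rw [← integrable_indicator_iff measurableSet_Iio]
  refine integrable_aux (hm.indicator measurableSet_Iio)
    (fun t => indicator_nonneg (fun s _ => h0 s) t)
    (fun t => ?_) (lo := D) (hi := a) (fun t ht => ?_) (fun t ht => ?_)
  · by_cases ht : t ∈ Iio a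
    · rw [indicator_of_mem ht]; exact h1 t
    · rw [indicator_of_notMem ht]; exact zero_le_one
  · by_cases ht' : t ∈ Iio a
    · rw [indicator_of_mem ht']; exact hlo t ht
    · rw [indicator_of_notMem ht']
  · have : t ∉ Iio a := by simp [mem_Iio]; linarith
    rw [indicator_of_notMem this]

lemma key_mono (hP : FAP.IsFAPm P) (heq : FAP.EquivP P P₀) {f g : Ω → ℝ}
    (hf : Measurable f) (hg : Measurable g) {Cf Cg : ℝ}
    (hCf : ∀ᵐ ω ∂P₀, |f ω| ≤ Cf) (hCg : ∀ᵐ ω ∂P₀, |g ω| ≤ Cg)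
    {δ : ℝ} (hδ : 0 ≤ δ) (hfg : ∀ᵐ ω ∂P₀, f ω ≤ g ω + δ) :
    FAP.faIntegral P f ≤ FAP.faIntegral P g + 2 * δ := by
  set F : ℝ → ℝ := fun t => P {ω | t < f ω} with hF
  set G : ℝ → ℝ := fun t => P {ω | t < g ω} with hG
  have hFm : Measurable F := (F_antitone hP hf).measurable
  have hGm : Measurable G := (F_antitone hP hg).measurable
  have hF0 : ∀ t, 0 ≤ F t := F_nonneg hP hf
  have hG0 : ∀ t, 0 ≤ G t := F_nonneg hP hg
  have hF1 : ∀ t, F t ≤ 1 := F_le_one hP hf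
  have hG1 : ∀ t, G t ≤ 1 := F_le_one hP hg
  have hFhi : ∀ t, Cf ≤ t → F t = 0 := fun t ht =>
    F_zero heq hf (hCf.mono fun ω hω => (abs_le.mp hω).2) ht
  have hGhi : ∀ t, Cg ≤ t → G t = 0 := fun t ht =>
    F_zero heq hg (hCg.mono fun ω hω => (abs_le.mp hω).2) ht
  have hFlo : ∀ t, t ≤ -Cf - 1 → F t = 1 := fun t ht =>
    F_one hP heq hf (hCf.mono fun ω hω => (abs_le.mp hω).1) (by linarith)
  have hGlo : ∀ t, t ≤ -Cg - 1 → G t = 1 := fun t ht =>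
    F_one hP heq hg (hCg.mono fun ω hω => (abs_le.mp hω).1) (by linarith)
  -- pointwise comparison
  have hpt : ∀ t, F t ≤ G (t - δ) := fun t => by
    refine P_ae_mono hP heq (measSet hf t) (measSet hg (t - δ))
      (hfg.mono fun ω hω ht => ?_)
    simp only [mem_setOf_eq] at ht ⊢
    linarith
  -- integrabilities
  have hFI : IntegrableOn F (Ioi 0) := integrableOn_Ioi_aux hFm hF0 hF1 hFhi 0
  have hGm' : Measurable (fun t => G (t - δ)) := hGm.comp (measurable_sub_const δ)
  have hG'I : IntegrableOn (fun t => G (t - δ)) (Ioi 0) :=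
    integrableOn_Ioi_aux hGm' (fun t => hG0 _) (fun t => hG1 _)
      (D := Cg + δ) (fun t ht => hGhi _ (by linarith)) 0
  have hGIoi : ∀ a : ℝ, IntegrableOn G (Ioi a) := integrableOn_Ioi_aux hGm hG0 hG1 hGhi
  have hGIoc : IntegrableOn G (Ioc (-δ) 0) := (hGIoi (-δ)).mono_set Ioc_subset_Ioi_self
  -- positive part
  have step1 : ∫ t in Ioi (0:ℝ), F t ≤ ∫ t in Ioi (0:ℝ), G (t - δ) :=
    setIntegral_mono hFI hG'I hpt
  have step2 : ∫ t in Ioi (0:ℝ), G (t - δ) = ∫ t in Ioi (-δ), G t := by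
    rw [← integral_indicator measurableSet_Ioi, ← integral_indicator measurableSet_Ioi]
    have hind : (Ioi (0:ℝ)).indicator (fun t => G (t - δ)) =
        fun t => (Ioi (-δ)).indicator G (t - δ) := by
      funext t
      by_cases ht : t ∈ Ioi (0:ℝ)
      · rw [indicator_of_mem ht, indicator_of_mem (by simp only [mem_Ioi] at ht ⊢; linarith)]
      · rw [indicator_of_notMem ht, indicator_of_notMem (by
          simp only [mem_Ioi, not_lt] at ht ⊢; linarith)]
    rw [hind, integral_sub_right_eq_self ((Ioi (-δ)).indicator G) δ]
  have step3 : ∫ t in Ioi (-δ), G t =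
      (∫ t in Ioc (-δ) 0, G t) + ∫ t in Ioi (0:ℝ), G t := by
    rw [← Ioc_union_Ioi_eq_Ioi (neg_nonpos.2 hδ),
      setIntegral_union Ioc_disjoint_Ioi_same measurableSet_Ioi hGIoc (hGIoi 0)]
  have step4 : ∫ t in Ioc (-δ) 0, G t ≤ δ := by
    have : ∫ t in Ioc (-δ) 0, G t ≤ ∫ _t in Ioc (-δ) 0, (1:ℝ) :=
      setIntegral_mono hGIoc (integrableOn_const measure_Ioc_lt_top.ne)
        (fun t => hG1 t)
    rw [setIntegral_const, measureReal_def, Real.volume_Ioc, smul_eq_mul, mul_one] at this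
    calc ∫ t in Ioc (-δ) 0, G t ≤ (ENNReal.ofReal (0 - -δ)).toReal := this
    _ = δ := by rw [zero_sub, neg_neg, ENNReal.toReal_ofReal hδ]
  -- negative part
  set H : ℝ → ℝ := fun t => 1 - F t with hH
  set K : ℝ → ℝ := fun t => 1 - G t with hK
  have hHm : Measurable H := measurable_const.sub hFm
  have hKm : Measurable K := measurable_const.sub hGm
  have hHI : IntegrableOn H (Iio 0) :=
    integrableOn_Iio_aux hHm (fun t => by simp [hH, hF1 t]) (fun t => by simp [hH, hF0 t])
      (D := -Cf - 1) (fun t ht => by simp [hH, hFlo t ht]) 0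
  have hK'I : IntegrableOn (fun t => K (t - δ)) (Iio 0) :=
    integrableOn_Iio_aux (hKm.comp (measurable_sub_const δ))
      (fun t => by simp [hK, hG1 _]) (fun t => by simp [hK, hG0 _])
      (D := -Cg - 1 + δ) (fun t ht => by simp [hK, hGlo (t - δ) (by linarith)]) 0
  have hKIio : ∀ a : ℝ, IntegrableOn K (Iio a) :=
    integrableOn_Iio_aux hKm (fun t => by simp [hK, hG1 t]) (fun t => by simp [hK, hG0 t])
      (D := -Cg - 1) (fun t ht => by simp [hK, hGlo t ht])
  have hKIco : IntegrableOn K (Ico (-δ) 0) := (hKIio 0).mono_set Ico_subset_Iio_self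
  have nstep1 : ∫ t in Iio (0:ℝ), K (t - δ) ≤ ∫ t in Iio (0:ℝ), H t :=
    setIntegral_mono hK'I hHI (fun t => by simp only [hH, hK]; linarith [hpt t])
  have nstep2 : ∫ t in Iio (0:ℝ), K (t - δ) = ∫ t in Iio (-δ), K t := by
    rw [← integral_indicator measurableSet_Iio, ← integral_indicator measurableSet_Iio]
    have hind : (Iio (0:ℝ)).indicator (fun t => K (t - δ)) =
        fun t => (Iio (-δ)).indicator K (t - δ) := by
      funext t
      by_cases ht : t ∈ Iio (0:ℝ)
      · rw [indicator_of_mem ht, indicator_of_mem (by simp only [mem_Iio] at ht ⊢; linarith)]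
      · rw [indicator_of_notMem ht, indicator_of_notMem (by
          simp only [mem_Iio, not_lt] at ht ⊢; linarith)]
    rw [hind, integral_sub_right_eq_self ((Iio (-δ)).indicator K) δ]
  have nstep3 : ∫ t in Iio (0:ℝ), K t =
      (∫ t in Iio (-δ), K t) + ∫ t in Ico (-δ) 0, K t := by
    rw [← Iio_union_Ico_eq_Iio (neg_nonpos.2 hδ),
      setIntegral_union ((Iio_disjoint_Ici le_rfl).mono_right Ico_subset_Ici_self)
        measurableSet_Ico (hKIio (-δ)) hKIco]
  have nstep4 : ∫ t in Ico (-δ) 0, K t ≤ δ := by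
    have : ∫ t in Ico (-δ) 0, K t ≤ ∫ _t in Ico (-δ) 0, (1:ℝ) :=
      setIntegral_mono hKIco (integrableOn_const measure_Ico_lt_top.ne)
        (fun t => by simp [hK, hG0 t])
    rw [setIntegral_const, measureReal_def, Real.volume_Ico, smul_eq_mul, mul_one] at this
    calc ∫ t in Ico (-δ) 0, K t ≤ (ENNReal.ofReal (0 - -δ)).toReal := this
    _ = δ := by rw [zero_sub, neg_neg, ENNReal.toReal_ofReal hδ]
  -- combine
  have hA : ∫ t in Ioi (0:ℝ), F t ≤ (∫ t in Ioi (0:ℝ), G t) + δ := by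
    rw [step2, step3] at step1; linarith
  have hB : (∫ t in Iio (0:ℝ), K t) - δ ≤ ∫ t in Iio (0:ℝ), H t := by
    rw [nstep2] at nstep1; linarith [nstep3, nstep4]
  simp only [FAP.faIntegral, hF, hG, hH, hK] at *
  linarith

lemma key_pos (hP : FAP.IsFAPm P) (heq : FAP.EquivP P P₀) {f : Ω → ℝ} (hf : Measurable f)
    (hpos : ∀ᵐ ω ∂P₀, 0 ≤ f ω) {ε : ℝ} (hε : 0 < ε) (hne : P₀ {ω | ε < f ω} ≠ 0)
    {Cf : ℝ} (hCf : ∀ᵐ ω ∂P₀, |f ω| ≤ Cf) : 0 < FAP.faIntegral P f := by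
  set F : ℝ → ℝ := fun t => P {ω | t < f ω} with hF
  have hFm : Measurable F := (F_antitone hP hf).measurable
  have hF0 : ∀ t, 0 ≤ F t := F_nonneg hP hf
  have hF1 : ∀ t, F t ≤ 1 := F_le_one hP hf
  have hFhi : ∀ t, Cf ≤ t → F t = 0 := fun t ht =>
    F_zero heq hf (hCf.mono fun ω hω => (abs_le.mp hω).2) ht
  have hFI : IntegrableOn F (Ioi 0) := integrableOn_Ioi_aux hFm hF0 hF1 hFhi 0
  -- negative part vanishes
  have hneg : ∫ t in Iio (0:ℝ), (1 - F t) = 0 := by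
    rw [setIntegral_congr_fun measurableSet_Iio (g := fun _ => (0:ℝ))
      (fun t ht => by
        have := F_one hP heq hf hpos (ht : t < 0)
        simp only [hF] at this ⊢
        rw [this]; ring)]
    simp
  -- positive part lower bound
  have hc0 : 0 < P {ω | ε < f ω} := by
    rcases (hP.2.1 _ (measSet hf ε)).lt_or_eq with h | h
    · exact h
    · exact absurd ((heq _ (measSet hf ε)).1 h.symm) hne
  have hmono : ∫ _t in Ioc (0:ℝ) ε, P {ω | ε < f ω} ≤ ∫ t in Ioc (0:ℝ) ε, F t := by
    refine setIntegral_mono_on (integrableOn_const measure_Ioc_lt_top.ne)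
      (hFI.mono_set Ioc_subset_Ioi_self) measurableSet_Ioc (fun t ht => ?_)
    exact P_mono hP (measSet hf ε) (measSet hf t) (fun ω hω => lt_of_le_of_lt ht.2 hω)
  rw [setIntegral_const, measureReal_def, Real.volume_Ioc, smul_eq_mul, sub_zero,
    ENNReal.toReal_ofReal hε.le] at hmono
  have hsub : ∫ t in Ioc (0:ℝ) ε, F t ≤ ∫ t in Ioi (0:ℝ), F t :=
    setIntegral_mono_set hFI (Filter.Eventually.of_forall hF0)
      (HasSubset.Subset.eventuallyLE Ioc_subset_Ioi_self)
  have hpos' : 0 < ε * P {ω | ε < f ω} := mul_pos hε hc0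
  simp only [FAP.faIntegral, hF] at hneg ⊢
  rw [hneg, sub_zero]
  calc (0:ℝ) < ε * P {ω | ε < f ω} := hpos'
  _ ≤ ∫ t in Ioc (0:ℝ) ε, P {ω | t < f ω} := hmono
  _ ≤ ∫ t in Ioi (0:ℝ), P {ω | t < f ω} := hsub

open scoped ENNReal in
lemma Lp_ae_bound {Ω : Type*} [MeasurableSpace Ω] {P₀ : Measure Ω} (h : Lp ℝ ⊤ P₀) :
    ∀ᵐ ω ∂P₀, |h ω| ≤ ‖h‖ := by
  filter_upwards [ae_le_eLpNormEssSup (f := ⇑h) (μ := P₀)] with ω hω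
  rw [Lp.norm_def]
  have h1 : |h ω| = ((‖h ω‖₊ : ℝ≥0∞)).toReal := by simp [Real.norm_eq_abs]
  rw [h1]
  exact ENNReal.toReal_mono (Lp.eLpNorm_ne_top h) (by rw [eLpNorm_exponent_top]; exact hω)

end FAPaux

theorem stmt18 {Ω : Type*} [MeasurableSpace Ω] (P₀ : Measure Ω) [IsProbabilityMeasure P₀]
    (L : Submodule ℝ (Lp ℝ ⊤ P₀))
    (P : Set Ω → ℝ) (hP : FAP.IsFAPm P) (heq : FAP.EquivP P P₀)
    (hmart : ∀ f ∈ L, FAP.faIntegral P (f : Ω → ℝ) = 0) :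
    closure {g : Lp ℝ ⊤ P₀ | ∃ X ∈ L, ∃ Z : Lp ℝ ⊤ P₀,
        (∀ᵐ ω ∂P₀, 0 ≤ Z ω) ∧ g = X - Z} ∩
      {f : Lp ℝ ⊤ P₀ | ∀ᵐ ω ∂P₀, 0 ≤ f ω} = {0} := by
  ext f
  simp only [mem_inter_iff, mem_setOf_eq, mem_singleton_iff]
  constructor
  · rintro ⟨hcl, hpos⟩
    by_contra hne
    have fm : Measurable ⇑f := (Lp.stronglyMeasurable f).measurable
    have hCf := FAPaux.Lp_ae_bound f
    have hex : ∃ ε : ℝ, 0 < ε ∧ P₀ {ω | ε < f ω} ≠ 0 := by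
      by_contra h
      push_neg at h
      apply hne
      rw [Lp.eq_zero_iff_ae_eq_zero]
      have hnull : P₀ {ω | 0 < f ω} = 0 := by
        refine measure_mono_null (fun ω hω => ?_)
          (measure_iUnion_null (s := fun n : ℕ => {ω | (1 : ℝ) / (n + 1) < f ω})
            fun n => h _ (by positivity))
        obtain ⟨n, hn⟩ := exists_nat_one_div_lt (show (0 : ℝ) < f ω from hω)
        exact mem_iUnion.2 ⟨n, hn⟩
      have h2 : ∀ᵐ ω ∂P₀, ¬ (0 < f ω) := by
        rw [ae_iff]
        simpa [not_not] using hnull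
      filter_upwards [h2, hpos] with ω h1 h2'
      simp only [Pi.zero_apply]
      exact le_antisymm (not_lt.1 h1) h2'
    obtain ⟨ε, hε, hPε⟩ := hex
    have hc : 0 < FAP.faIntegral P ⇑f := FAPaux.key_pos hP heq fm hpos hε hPε hCf
    set c := FAP.faIntegral P ⇑f with hcdef
    rw [Metric.mem_closure_iff] at hcl
    obtain ⟨g, hgS, hdist⟩ := hcl (c / 4) (by positivity)
    obtain ⟨X, hXL, Z, hZpos, hgXZ⟩ := hgS
    subst hgXZ
    have hXm : Measurable ⇑X := (Lp.stronglyMeasurable X).measurable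
    have hXZm : Measurable ⇑(X - Z) := (Lp.stronglyMeasurable (X - Z)).measurable
    have hle0 : FAP.faIntegral P ⇑(X - Z) ≤ 0 := by
      have hae : ∀ᵐ ω ∂P₀, (X - Z) ω ≤ X ω + 0 := by
        filter_upwards [Lp.coeFn_sub X Z, hZpos] with ω h1 h2
        rw [h1]
        simp only [Pi.sub_apply, add_zero]
        linarith
      have := FAPaux.key_mono hP heq hXZm hXm (FAPaux.Lp_ae_bound (X - Z))
        (FAPaux.Lp_ae_bound X) le_rfl hae
      rw [hmart X hXL] at this
      linarith
    have hfg : ∀ᵐ ω ∂P₀, f ω ≤ (X - Z) ω + c / 4 := by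
      have hnorm : ‖f - (X - Z)‖ < c / 4 := by
        rw [← dist_eq_norm]
        exact hdist
      filter_upwards [FAPaux.Lp_ae_bound (f - (X - Z)), Lp.coeFn_sub f (X - Z)] with ω h1 h2
      rw [h2] at h1
      simp only [Pi.sub_apply] at h1
      have := (abs_le.mp (h1.trans hnorm.le)).2
      linarith
    have hfinal := FAPaux.key_mono hP heq fm hXZm (FAPaux.Lp_ae_bound f)
      (FAPaux.Lp_ae_bound (X - Z)) (by positivity : (0 : ℝ) ≤ c / 4) hfg
    rw [← hcdef] at hfinal
    linarith
  · rintro rfl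
    constructor
    · refine subset_closure ⟨0, L.zero_mem, 0, ?_, (sub_zero (0 : Lp ℝ ⊤ P₀)).symm⟩
      filter_upwards [Lp.coeFn_zero ℝ ⊤ P₀] with ω hω
      rw [hω]
      simp
    · filter_upwards [Lp.coeFn_zero ℝ ⊤ P₀] with ω hω
      rw [hω]
      simp
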